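/- Let p >= 3 and suppose Player m (1 <= m <= p) has a winning strategy in the p-player (c,k)-nacci Zeckendorf game on n. If Player m is not the player who makes the (c+1)-st of the following c+2 consecutive moves, then no play consistent with a winning strategy of Player m contains these c+2 consecutive moves: c+1 consecutive moves each replacing c+1 copies of S_1 by S_2, followed by the move replacing c+1 copies of S_2 by S_3 and S_1 (if k = 1) or by S_3 (if k > 1). -/

import Mathlib

/-- The `(c,k)`-nacci numbers: `nacci c k 1 = 1`,
`nacci c k (i+1) = c * (nacci c k i + ⋯ + nacci c k 1) + 1` for `1 ≤ i ≤ k`, and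
`nacci c k (i+1) = c * (nacci c k i + ⋯ + nacci c k (i-k))` for `i ≥ k + 1`.
(The value at `0` is junk.) -/
def nacci (c k : ℕ) : ℕ → ℕ
  | 0 => 0
  | 1 => 1
  | (i + 2) =>
    if i + 1 ≤ k then
      c * ((Finset.range (i + 1)).attach.sum fun j => nacci c k (j.1 + 1)) + 1
    else
      c * ((Finset.Icc (i + 1 - k) (i + 1)).attach.sum fun j => nacci c k j.1)
decreasing_by
  · have hj := j.2
    simp only [Finset.mem_range] at hj
    omega
  · have hj := j.2
    simp only [Finset.mem_Icc] at hj
    omega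


/-- The multiset consisting of `c` copies of `nacci c k j` for each `j` in the
finite set `s`. -/
def nacciBlock (c k : ℕ) (s : Finset ℕ) : Multiset ℕ :=
  s.val.bind fun j => Multiset.replicate c (nacci c k j)

/-- A legal move of the `(c,k)`-nacci Zeckendorf game, as a relation between the
position before and the position after the move (positions are multisets of naturals). -/
def CkMove (c k : ℕ) (A B : Multiset ℕ) : Prop :=
  -- (1) for `i ≥ k+1`: `c` copies each of `S_{i-k}, …, S_i` become `S_{i+1}`
  (∃ i, k + 1 ≤ i ∧ nacciBlock c k (Finset.Icc (i - k) i) ≤ A ∧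
    B = A - nacciBlock c k (Finset.Icc (i - k) i) + {nacci c k (i + 1)}) ∨
  -- (2) for `2 ≤ i ≤ k`: `c+1` copies of `S_1` and `c` copies each of `S_2, …, S_i`
  -- become `S_{i+1}`
  (∃ i, 2 ≤ i ∧ i ≤ k ∧
    Multiset.replicate (c + 1) (nacci c k 1) + nacciBlock c k (Finset.Icc 2 i) ≤ A ∧
    B = A - (Multiset.replicate (c + 1) (nacci c k 1) + nacciBlock c k (Finset.Icc 2 i))
        + {nacci c k (i + 1)}) ∨
  -- (3) `c+1` copies of `S_1` become `S_2`
  (Multiset.replicate (c + 1) (nacci c k 1) ≤ A ∧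
    B = A - Multiset.replicate (c + 1) (nacci c k 1) + {nacci c k 2}) ∨
  -- (3) for `1 < i < k+1`: `c+1` copies of `S_i` become `S_{i+1}`
  (∃ i, 1 < i ∧ i < k + 1 ∧ Multiset.replicate (c + 1) (nacci c k i) ≤ A ∧
    B = A - Multiset.replicate (c + 1) (nacci c k i) + {nacci c k (i + 1)}) ∨
  -- (3) `c+1` copies of `S_{k+1}` become `S_{k+2}` and `S_1`
  (Multiset.replicate (c + 1) (nacci c k (k + 1)) ≤ A ∧
    B = A - Multiset.replicate (c + 1) (nacci c k (k + 1))
        + {nacci c k (k + 2), nacci c k 1}) ∨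
  -- (3) for `i > k+1`: `c+1` copies of `S_i` become `S_{i+1}` and `c` copies of `S_{i-k-1}`
  (∃ i, k + 1 < i ∧ Multiset.replicate (c + 1) (nacci c k i) ≤ A ∧
    B = A - Multiset.replicate (c + 1) (nacci c k i)
        + ({nacci c k (i + 1)} + Multiset.replicate c (nacci c k (i - k - 1))))

/-- A position is terminal when no legal move remains. -/
def Terminal (Move : Multiset ℕ → Multiset ℕ → Prop) (pos : Multiset ℕ) : Prop :=
  ∀ B, ¬ Move pos B

/-- `AllianceWins Move p team t pos`: in the `p`-player game with move relation `Move`,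
where players `1, …, p` move cyclically (the mover of the `t`-th move, counting from `t = 0`,
is player `t % p + 1`) and the side making the last legal move wins, the alliance
(set of players) `team` can guarantee, from position `pos` with `t` moves already made,
that one of its members makes the last move, no matter how the other players play. -/
inductive AllianceWins (Move : Multiset ℕ → Multiset ℕ → Prop) (p : ℕ) (team : ℕ → Prop) :
    ℕ → Multiset ℕ → Prop
  | endMove (t : ℕ) (pos B : Multiset ℕ) (hturn : team (t % p + 1)) (hmove : Move pos B)
      (hterm : Terminal Move B) : AllianceWins Move p team t pos
  | contMove (t : ℕ) (pos B : Multiset ℕ) (hturn : team (t % p + 1)) (hmove : Move pos B)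
      (hwin : AllianceWins Move p team (t + 1) B) : AllianceWins Move p team t pos
  | oppMove (t : ℕ) (pos : Multiset ℕ) (hturn : ¬ team (t % p + 1))
      (hex : ∃ B, Move pos B)
      (hall : ∀ B, Move pos B → AllianceWins Move p team (t + 1) B) :
      AllianceWins Move p team t pos

/-- Player `m` has a winning strategy in the `p`-player game on `n`
(played from `n` copies of `1`, with player 1 moving first). -/
def PlayerWins (Move : Multiset ℕ → Multiset ℕ → Prop) (p m n : ℕ) : Prop :=
  AllianceWins Move p (fun q => q = m) 0 (Multiset.replicate n 1)

/-- `Consistent σ p m xs`: in the sequence of positions `xs`, whenever it is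
player `m`'s turn (the `t`-th move, `t % p + 1 = m`), the next position is the
one prescribed by the strategy `σ` (a function of the move number and the
current position). -/
def Consistent (σ : ℕ → Multiset ℕ → Multiset ℕ) (p m : ℕ) (xs : List (Multiset ℕ)) : Prop :=
  ∀ t, t + 1 < xs.length → t % p + 1 = m →
    xs.getD (t + 1) 0 = σ t (xs.getD t 0)

/-- A (possibly partial) play of the game from the position `start`:
a nonempty sequence of positions beginning at `start` in which every
consecutive pair is related by a legal move. -/
def IsPlay (Move : Multiset ℕ → Multiset ℕ → Prop) (start : Multiset ℕ)
    (xs : List (Multiset ℕ)) : Prop :=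
  xs.head? = some start ∧ xs.Chain' Move

/-- A complete play of the game from `start`: a play whose last position is terminal. -/
def IsCompletePlay (Move : Multiset ℕ → Multiset ℕ → Prop) (start : Multiset ℕ)
    (xs : List (Multiset ℕ)) : Prop :=
  IsPlay Move start xs ∧ ∃ y, xs.getLast? = some y ∧ Terminal Move y

/-- `σ` is a winning strategy for player `m` in the `p`-player game from `start`:
along every play consistent with `σ`, whenever it is `m`'s turn and a legal move exists,
`σ` prescribes a legal move; and every complete play consistent with `σ` ends with a
move by player `m` (a play `x₀, …, x_L` has `L = xs.length - 1` moves, the last being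
move number `xs.length - 2`, made by player `(xs.length - 2) % p + 1`). -/
def IsWinningStrategy (Move : Multiset ℕ → Multiset ℕ → Prop) (p m : ℕ)
    (start : Multiset ℕ) (σ : ℕ → Multiset ℕ → Multiset ℕ) : Prop :=
  (∀ xs, IsPlay Move start xs → Consistent σ p m xs →
    ∀ y, xs.getLast? = some y → (xs.length - 1) % p + 1 = m → (∃ B, Move y B) →
      Move y (σ (xs.length - 1) y)) ∧
  (∀ xs, IsCompletePlay Move start xs → Consistent σ p m xs →
    (xs.length - 2) % p + 1 = m)

section NacciLemmas

variable {c k : ℕ}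

lemma nacci_one : nacci c k 1 = 1 := by rw [nacci]

lemma nacci_succ_low (hk : 1 ≤ k) {i : ℕ} (h1 : 1 ≤ i) (h2 : i ≤ k) :
    nacci c k (i + 1) = c * (∑ j ∈ Finset.Icc 1 i, nacci c k j) + 1 := by
  obtain ⟨i, rfl⟩ := Nat.exists_eq_add_of_le h1
  rw [show 1 + i + 1 = i + 2 by ring, nacci]
  rw [if_pos (by omega)]
  congr 1
  congr 1
  rw [Finset.sum_attach (Finset.range (i+1)) (fun j => nacci c k (j + 1))]
  rw [show Finset.Icc 1 (1 + i) = Finset.Ico 1 (i + 2) by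
    rw [← Finset.Ico_add_one_right_eq_Icc]; congr 1; omega]
  rw [Finset.sum_Ico_eq_sum_range]
  simp [add_comm]

lemma nacci_succ_high {i : ℕ} (h : k + 1 ≤ i) :
    nacci c k (i + 1) = c * ∑ j ∈ Finset.Icc (i - k) i, nacci c k j := by
  obtain ⟨i, rfl⟩ := Nat.exists_eq_add_of_le h
  rw [show k + 1 + i + 1 = (k + i) + 2 by ring, nacci]
  rw [if_neg (by omega)]
  congr 1
  rw [Finset.sum_attach]
  congr 2 <;> omega

lemma nacci_two (hk : 1 ≤ k) : nacci c k 2 = c + 1 := by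
  rw [show (2:ℕ) = 1 + 1 from rfl, nacci_succ_low hk le_rfl hk]
  simp [nacci_one]

lemma nacci_pos (hc : 1 ≤ c) (hk : 1 ≤ k) : ∀ i, 1 ≤ i → 1 ≤ nacci c k i := by
  intro i
  induction i using Nat.strong_induction_on with
  | _ i ih =>
    intro hi
    rcases i with _ | i
    · omega
    rcases i with _ | i
    · rw [nacci_one]
    · by_cases hle : i + 1 ≤ k
      · rw [nacci_succ_low hk (by omega) hle]; omega
      · rw [nacci_succ_high (by omega : k + 1 ≤ i + 1)]
        have hmem : i + 1 ∈ Finset.Icc (i + 1 - k) (i + 1) :=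
          Finset.mem_Icc.mpr ⟨by omega, le_rfl⟩
        have hs : nacci c k (i + 1) ≤ ∑ j ∈ Finset.Icc (i + 1 - k) (i + 1), nacci c k j :=
          Finset.single_le_sum (fun j _ => Nat.zero_le _) hmem
        have h1 : 1 ≤ nacci c k (i + 1) := ih (i+1) (by omega) (by omega)
        calc 1 = 1 * 1 := by omega
        _ ≤ c * ∑ j ∈ Finset.Icc (i + 1 - k) (i + 1), nacci c k j :=
          Nat.mul_le_mul hc (by omega)

lemma nacci_lt_succ (hc : 1 ≤ c) (hk : 1 ≤ k) {i : ℕ} (hi : 1 ≤ i) :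
    nacci c k i < nacci c k (i + 1) := by
  by_cases hle : i ≤ k
  · rw [nacci_succ_low hk hi hle]
    have hmem : i ∈ Finset.Icc 1 i := Finset.mem_Icc.mpr ⟨hi, le_rfl⟩
    have hs : nacci c k i ≤ ∑ j ∈ Finset.Icc 1 i, nacci c k j :=
      Finset.single_le_sum (fun j _ => Nat.zero_le _) hmem
    have h2 : 1 * nacci c k i ≤ c * ∑ j ∈ Finset.Icc 1 i, nacci c k j :=
      Nat.mul_le_mul hc hs
    omega
  · rw [nacci_succ_high (by omega : k + 1 ≤ i)]
    obtain ⟨i, rfl⟩ := Nat.exists_eq_add_of_le (show 1 ≤ i by omega)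
    rw [show 1 + i = i + 1 by ring] at *
    rw [Finset.sum_Icc_succ_top (by omega)]
    have hmem : i + 1 - k ∈ Finset.Icc (i + 1 - k) i := Finset.mem_Icc.mpr ⟨le_rfl, by omega⟩
    have hs : nacci c k (i + 1 - k) ≤ ∑ j ∈ Finset.Icc (i + 1 - k) i, nacci c k j :=
      Finset.single_le_sum (fun j _ => Nat.zero_le _) hmem
    have h1 : 1 ≤ nacci c k (i + 1 - k) := nacci_pos hc hk _ (by omega)
    have h2 : 1 * (1 + nacci c k (i + 1)) ≤
        c * ((∑ j ∈ Finset.Icc (i + 1 - k) i, nacci c k j) + nacci c k (i + 1)) :=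
      Nat.mul_le_mul hc (by omega)
    omega

lemma nacci_strict_mono (hc : 1 ≤ c) (hk : 1 ≤ k) {a b : ℕ} (ha : 1 ≤ a) (hab : a < b) :
    nacci c k a < nacci c k b := by
  induction b with
  | zero => omega
  | succ b ih =>
    rcases Nat.lt_or_ge a b with h | h
    · exact lt_trans (ih h) (nacci_lt_succ hc hk (by omega))
    · have : a = b := by omega
      subst this
      exact nacci_lt_succ hc hk ha

lemma nacci_le (hc : 1 ≤ c) (hk : 1 ≤ k) {a b : ℕ} (ha : 1 ≤ a) (hab : a ≤ b) :
    nacci c k a ≤ nacci c k b := by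
  rcases Nat.lt_or_ge a b with h | h
  · exact le_of_lt (nacci_strict_mono hc hk ha h)
  · have : a = b := by omega
    subst this; exact le_rfl
lemma icc_split_bot {a b : ℕ} (h : a ≤ b) (f : ℕ → ℕ) :
    ∑ j ∈ Finset.Icc a b, f j = f a + ∑ j ∈ Finset.Icc (a + 1) b, f j := by
  rw [Finset.Icc_eq_cons_Ioc h, Finset.sum_cons, Finset.Icc_add_one_left_eq_Ioc]

lemma id2 (hk : 1 ≤ k) {i : ℕ} (h2 : 2 ≤ i) (hik : i ≤ k) :
    nacci c k (i + 1) = (c + 1) * nacci c k 1 + c * ∑ j ∈ Finset.Icc 2 i, nacci c k j := by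
  rw [nacci_succ_low hk (by omega) hik, icc_split_bot (by omega) (nacci c k),
    nacci_one, Nat.mul_add]
  ring

lemma id3b (hk : 1 ≤ k) {i : ℕ} (h1 : 1 < i) (h2 : i < k + 1) :
    nacci c k (i + 1) = (c + 1) * nacci c k i := by
  obtain ⟨j, rfl⟩ := Nat.exists_eq_add_of_le (show 2 ≤ i by omega)
  rw [show 2 + j = j + 2 by ring] at *
  have e1 : nacci c k (j + 2 + 1) = c * (∑ l ∈ Finset.Icc 1 (j + 2), nacci c k l) + 1 :=
    nacci_succ_low hk (by omega) (by omega)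
  have e2 : nacci c k (j + 2) = c * (∑ l ∈ Finset.Icc 1 (j + 1), nacci c k l) + 1 :=
    nacci_succ_low hk (by omega) (by omega)
  have e3 : ∑ l ∈ Finset.Icc 1 (j + 2), nacci c k l
      = ∑ l ∈ Finset.Icc 1 (j + 1), nacci c k l + nacci c k (j + 2) :=
    Finset.sum_Icc_succ_top (by omega) _
  rw [e1, e3, Nat.mul_add]
  nlinarith [e2]

lemma id3c (hc : 1 ≤ c) (hk : 1 ≤ k) :
    (c + 1) * nacci c k (k + 1) = nacci c k (k + 2) + 1 := by
  have e1 : nacci c k (k + 2) = c * ∑ j ∈ Finset.Icc 1 (k + 1), nacci c k j := by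
    have := nacci_succ_high (c := c) (k := k) (i := k + 1) le_rfl
    rwa [show k + 1 - k = 1 by omega] at this
  have e2 : nacci c k (k + 1) = c * (∑ j ∈ Finset.Icc 1 k, nacci c k j) + 1 :=
    nacci_succ_low hk hk le_rfl
  have e3 : ∑ j ∈ Finset.Icc 1 (k + 1), nacci c k j
      = ∑ j ∈ Finset.Icc 1 k, nacci c k j + nacci c k (k + 1) := by
    rw [Finset.sum_Icc_succ_top (by omega)]
  rw [e1, e3, Nat.mul_add]
  nlinarith [e2]

lemma id3d (hc : 1 ≤ c) (hk : 1 ≤ k) {i : ℕ} (hi : k + 1 < i) :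
    (c + 1) * nacci c k i = nacci c k (i + 1) + c * nacci c k (i - k - 1) := by
  obtain ⟨j, rfl⟩ := Nat.exists_eq_add_of_le (show k + 2 ≤ i by omega)
  have e1 : nacci c k (k + 2 + j + 1)
      = c * ∑ l ∈ Finset.Icc (j + 2) (k + 2 + j), nacci c k l := by
    have := nacci_succ_high (c := c) (k := k) (i := k + 2 + j) (by omega)
    rwa [show k + 2 + j - k = j + 2 by omega] at this
  have e2 : nacci c k (k + 2 + j)
      = c * ∑ l ∈ Finset.Icc (j + 1) (k + 1 + j), nacci c k l := by
    have := nacci_succ_high (c := c) (k := k) (i := k + 1 + j) (by omega)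
    rwa [show k + 1 + j - k = j + 1 by omega, show k + 1 + j + 1 = k + 2 + j by omega] at this
  have e3 : ∑ l ∈ Finset.Icc (j + 2) (k + 2 + j), nacci c k l
      = ∑ l ∈ Finset.Icc (j + 2) (k + 1 + j), nacci c k l + nacci c k (k + 2 + j) := by
    rw [show k + 2 + j = (k + 1 + j) + 1 by omega, Finset.sum_Icc_succ_top (by omega)]
  have e4 : ∑ l ∈ Finset.Icc (j + 1) (k + 1 + j), nacci c k l
      = nacci c k (j + 1) + ∑ l ∈ Finset.Icc (j + 2) (k + 1 + j), nacci c k l :=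
    icc_split_bot (by omega) _
  rw [show k + 2 + j - k - 1 = j + 1 by omega]
  rw [e1, e3, Nat.mul_add]
  nlinarith [e2, e4]

def sqsum (M : Multiset ℕ) : ℕ := (M.map (fun x => x * x)).sum

lemma sqsum_le (M : Multiset ℕ) : sqsum M ≤ M.sum * M.sum := by
  induction M using Multiset.induction_on with
  | empty => simp [sqsum]
  | cons a s ih =>
    simp only [sqsum, Multiset.map_cons, Multiset.sum_cons] at *
    nlinarith [Nat.zero_le (a * s.sum)]

lemma exists_cons_of_ne_zero' {M : Multiset ℕ} (h : M ≠ 0) : ∃ a s, M = a ::ₘ s := by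
  obtain ⟨a, ha⟩ := Multiset.exists_mem_of_ne_zero h
  obtain ⟨s, hs⟩ := Multiset.exists_cons_of_mem ha
  exact ⟨a, s, hs⟩

lemma sum_pos_of_mem (M : Multiset ℕ) (h1 : ∀ x ∈ M, 1 ≤ x) (h0 : M ≠ 0) : 1 ≤ M.sum := by
  obtain ⟨a, s, rfl⟩ := exists_cons_of_ne_zero' h0
  have := h1 a (Multiset.mem_cons_self a s)
  simp only [Multiset.sum_cons]
  omega

lemma sqsum_lt (M : Multiset ℕ) (h1 : ∀ x ∈ M, 1 ≤ x) (h2 : 2 ≤ Multiset.card M) :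
    sqsum M < M.sum * M.sum := by
  obtain ⟨a, s, rfl⟩ := exists_cons_of_ne_zero' (show M ≠ 0 by rintro rfl; simp at h2)
  have ha := h1 a (Multiset.mem_cons_self a s)
  have hs : 1 ≤ s.sum := by
    apply sum_pos_of_mem s (fun x hx => h1 x (Multiset.mem_cons_of_mem hx))
    simp only [Multiset.card_cons] at h2
    intro h; rw [h] at h2; simp at h2
  have hle := sqsum_le s
  simp only [sqsum, Multiset.map_cons, Multiset.sum_cons] at *
  nlinarith
lemma sqsum_add (A B : Multiset ℕ) : sqsum (A + B) = sqsum A + sqsum B := by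
  simp [sqsum]

lemma sqsum_replicate (n a : ℕ) : sqsum (Multiset.replicate n a) = n * (a * a) := by
  simp [sqsum, Multiset.map_replicate, Multiset.sum_replicate, smul_eq_mul]

lemma sqsum_singleton (a : ℕ) : sqsum {a} = a * a := by
  simp [sqsum]

lemma nacciBlock_sum (s : Finset ℕ) :
    (nacciBlock c k s).sum = ∑ j ∈ s, c * nacci c k j := by
  rw [nacciBlock, Multiset.sum_bind]
  rw [show (∑ j ∈ s, c * nacci c k j) =
    (s.val.map (fun j => c * nacci c k j)).sum from rfl]
  congr 1
  apply Multiset.map_congr rfl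
  intro x _
  simp [Multiset.sum_replicate, smul_eq_mul]

lemma nacciBlock_sqsum (s : Finset ℕ) :
    sqsum (nacciBlock c k s) = ∑ j ∈ s, c * (nacci c k j * nacci c k j) := by
  rw [nacciBlock, sqsum, Multiset.map_bind, Multiset.sum_bind]
  rw [show (∑ j ∈ s, c * (nacci c k j * nacci c k j)) =
    (s.val.map (fun j => c * (nacci c k j * nacci c k j))).sum from rfl]
  congr 1
  apply Multiset.map_congr rfl
  intro x _
  simp [Multiset.map_replicate, Multiset.sum_replicate, smul_eq_mul]

lemma nacciBlock_card (s : Finset ℕ) :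
    Multiset.card (nacciBlock c k s) = c * s.card := by
  rw [nacciBlock, Multiset.card_bind]
  rw [show (Multiset.map (Multiset.card ∘ fun j => Multiset.replicate c (nacci c k j)) s.val)
      = Multiset.map (fun _ => c) s.val by
    apply Multiset.map_congr rfl; intro x _; simp]
  simp [Multiset.map_const', Multiset.sum_replicate, smul_eq_mul, mul_comm]

lemma mem_nacciBlock {s : Finset ℕ} {x : ℕ} (hx : x ∈ nacciBlock c k s) :
    ∃ j ∈ s, x = nacci c k j := by
  rw [nacciBlock, Multiset.mem_bind] at hx
  obtain ⟨j, hj, hxr⟩ := hx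
  rw [Multiset.eq_of_mem_replicate hxr]
  exact ⟨j, hj, rfl⟩

noncomputable def mu (A : Multiset ℕ) : ℕ := A.sum * A.sum - sqsum A

lemma mu_lt_of_parts {A X Y : Multiset ℕ} (hle : X ≤ A) (hsum : X.sum = Y.sum)
    (hsq : sqsum X < sqsum Y) : mu (A - X + Y) < mu A := by
  obtain ⟨D, rfl⟩ := Multiset.le_iff_exists_add.mp hle
  rw [add_tsub_cancel_left]
  have h1 : (D + Y).sum = (X + D).sum := by
    rw [Multiset.sum_add, Multiset.sum_add]; omega
  have h2 : sqsum (X + D) < sqsum (D + Y) := by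
    rw [sqsum_add, sqsum_add]; omega
  have h3 := sqsum_le (D + Y)
  unfold mu
  rw [h1] at *
  omega

lemma ckmove_mu_lt (hc : 1 ≤ c) (hk : 1 ≤ k) {A B : Multiset ℕ}
    (h : CkMove c k A B) : mu B < mu A := by
  have hpos := nacci_pos (c := c) (k := k) hc hk
  rcases h with ⟨i, hki, hle, rfl⟩ | ⟨i, hi2, hik, hle, rfl⟩ | ⟨hle, rfl⟩ |
    ⟨i, hi1, hik, hle, rfl⟩ | ⟨hle, rfl⟩ | ⟨i, hki, hle, rfl⟩
  · -- M1
    have hX : (nacciBlock c k (Finset.Icc (i - k) i)).sum = nacci c k (i + 1) := by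
      rw [nacciBlock_sum, ← Finset.mul_sum, ← nacci_succ_high hki]
    apply mu_lt_of_parts hle
    · rw [Multiset.sum_singleton, hX]
    · rw [sqsum_singleton, ← hX]
      apply sqsum_lt
      · intro x hx
        obtain ⟨j, hj, rfl⟩ := mem_nacciBlock hx
        rw [Finset.mem_Icc] at hj
        exact hpos j (by omega)
      · rw [nacciBlock_card, Nat.card_Icc, show i + 1 - (i - k) = k + 1 by omega]
        nlinarith
  · -- M2
    have hX : (Multiset.replicate (c + 1) (nacci c k 1) + nacciBlock c k (Finset.Icc 2 i)).sum
        = nacci c k (i + 1) := by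
      rw [Multiset.sum_add, Multiset.sum_replicate, smul_eq_mul, nacciBlock_sum,
        ← Finset.mul_sum, id2 hk hi2 hik]
    apply mu_lt_of_parts hle
    · rw [Multiset.sum_singleton, hX]
    · rw [sqsum_singleton, ← hX]
      apply sqsum_lt
      · intro x hx
        rw [Multiset.mem_add] at hx
        rcases hx with hx | hx
        · rw [Multiset.eq_of_mem_replicate hx]; exact hpos 1 le_rfl
        · obtain ⟨j, hj, rfl⟩ := mem_nacciBlock hx
          rw [Finset.mem_Icc] at hj
          exact hpos j (by omega)
      · rw [Multiset.card_add, Multiset.card_replicate, nacciBlock_card]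
        omega
  · -- M3a
    apply mu_lt_of_parts hle
    · rw [Multiset.sum_singleton, Multiset.sum_replicate, smul_eq_mul, nacci_one,
        nacci_two hk]; ring
    · rw [sqsum_singleton, sqsum_replicate, nacci_one, nacci_two hk]; nlinarith
  · -- M3b
    apply mu_lt_of_parts hle
    · rw [Multiset.sum_singleton, Multiset.sum_replicate, smul_eq_mul, id3b hk hi1 hik]
    · rw [sqsum_singleton, sqsum_replicate, id3b hk hi1 hik]
      have h1 : 1 ≤ nacci c k i := hpos i (by omega)
      nlinarith
  · -- M3c
    apply mu_lt_of_parts hle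
    · rw [Multiset.sum_replicate, smul_eq_mul]
      rw [show ({nacci c k (k + 2), nacci c k 1} : Multiset ℕ).sum
        = nacci c k (k + 2) + nacci c k 1 by simp]
      rw [nacci_one, id3c hc hk]
    · rw [sqsum_replicate]
      rw [show ({nacci c k (k + 2), nacci c k 1} : Multiset ℕ)
        = {nacci c k (k + 2)} + {nacci c k 1} from rfl]
      rw [sqsum_add, sqsum_singleton, sqsum_singleton, nacci_one]
      set E := nacci c k (k + 1) with hE
      set F := nacci c k (k + 2) with hF
      have hEF : E + 1 ≤ F := nacci_strict_mono hc hk (by omega) (by omega)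
      have hE2 : 2 ≤ E := by
        have := nacci_le hc hk (a := 2) (b := k + 1) (by omega) (by omega)
        rw [nacci_two hk] at this; omega
      have hid : (c + 1) * E = F + 1 := id3c hc hk
      nlinarith
  · -- M3d
    apply mu_lt_of_parts hle
    · rw [Multiset.sum_replicate, smul_eq_mul, Multiset.sum_add,
        Multiset.sum_singleton, Multiset.sum_replicate, smul_eq_mul, id3d hc hk hki]
    · rw [sqsum_replicate, sqsum_add, sqsum_singleton, sqsum_replicate]
      set Ai := nacci c k i with hAi
      set s' := nacci c k (i - k - 1) with hs'
      set B := nacci c k (i + 1) with hB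
      have hid : (c + 1) * Ai = B + c * s' := id3d hc hk hki
      have hlt : s' < Ai := nacci_strict_mono hc hk (by omega) (by omega)
      have hs1 : 1 ≤ s' := hpos _ (by omega)
      have hBZ : (B : ℤ) + c * s' = ((c : ℤ) + 1) * Ai := by exact_mod_cast hid.symm
      have hgoal : ((c : ℤ) + 1) * (Ai * Ai) < B * B + c * (s' * s') := by
        have expand : ((c : ℤ) + 1) * (Ai * Ai) + (c * ((c : ℤ) + 1)) * ((Ai : ℤ) - s') ^ 2
            = B * B + c * (s' * s') := by nlinarith [hBZ, sq_nonneg ((Ai : ℤ) - s')]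
        have hpos2 : 0 < (c * ((c : ℤ) + 1)) * ((Ai : ℤ) - s') ^ 2 := by
          apply mul_pos
          · positivity
          · apply pow_pos; push_cast; omega
        linarith
      exact_mod_cast hgoal
lemma mod_succ_ne {p u : ℕ} (hp : 2 ≤ p) : (u + 1) % p ≠ u % p := by
  intro h
  have h2 : u ≡ u + 1 [MOD p] := h.symm
  have h3 := (Nat.modEq_iff_dvd' (Nat.le_succ u)).mp h2
  rw [show u + 1 - u = 1 by omega] at h3
  have := Nat.le_of_dvd (by omega) h3
  omega

lemma getD_append_lt {l l' : List (Multiset ℕ)} {i : ℕ} (h : i < l.length) :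
    (l ++ l').getD i 0 = l.getD i 0 := by
  rw [List.getD_eq_getElem?_getD, List.getD_eq_getElem?_getD, List.getElem?_append, if_pos h]

lemma getD_append_len {l : List (Multiset ℕ)} {Y : Multiset ℕ} :
    (l ++ [Y]).getD l.length 0 = Y := by
  rw [List.getD_eq_getElem?_getD, List.getElem?_append, if_neg (by omega)]
  simp

lemma getD_take' {l : List (Multiset ℕ)} {n i : ℕ} (h : i < n) :
    (l.take n).getD i 0 = l.getD i 0 := by
  rw [List.getD_eq_getElem?_getD, List.getD_eq_getElem?_getD, List.getElem?_take, if_pos h]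

lemma getD_of_getLast? {l : List (Multiset ℕ)} {y : Multiset ℕ} (h : l.getLast? = some y) :
    l.getD (l.length - 1) 0 = y := by
  rw [List.getLast?_eq_getElem?] at h
  rw [List.getD_eq_getElem?_getD, h]
  rfl

lemma getLast?_take {l : List (Multiset ℕ)} {i : ℕ} (h : i < l.length) :
    (l.take (i + 1)).getLast? = some (l.getD i 0) := by
  have hlen : (l.take (i + 1)).length = i + 1 := by
    rw [List.length_take]; omega
  rw [List.getLast?_eq_getElem?, hlen, Nat.add_sub_cancel, List.getElem?_take,
    if_pos (Nat.lt_succ_self i), List.getD_eq_getElem?_getD]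
  rw [List.getElem?_eq_getElem h]
  rfl

lemma isPlay_take {Move : Multiset ℕ → Multiset ℕ → Prop} {st : Multiset ℕ}
    {xs : List (Multiset ℕ)} (h : IsPlay Move st xs) (n : ℕ) :
    IsPlay Move st (xs.take (n + 1)) := by
  obtain ⟨hh, hch⟩ := h
  cases xs with
  | nil => simp at hh
  | cons a l => exact ⟨by simp at hh ⊢; exact hh, hch.take _⟩

lemma consistent_take {σ : ℕ → Multiset ℕ → Multiset ℕ} {p m : ℕ}
    {xs : List (Multiset ℕ)} (h : Consistent σ p m xs) (n : ℕ) :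
    Consistent σ p m (xs.take n) := by
  intro t ht hm
  have hlen : (xs.take n).length ≤ n := by rw [List.length_take]; omega
  have hlen2 : (xs.take n).length ≤ xs.length := by rw [List.length_take]; omega
  rw [getD_take' (by omega), getD_take' (by omega)]
  exact h t (by omega) hm

lemma isPlay_snoc {Move : Multiset ℕ → Multiset ℕ → Prop} {st y Y : Multiset ℕ}
    {ys : List (Multiset ℕ)} (h : IsPlay Move st ys) (hlast : ys.getLast? = some y)
    (hmove : Move y Y) : IsPlay Move st (ys ++ [Y]) := by
  obtain ⟨hh, hch⟩ := h
  constructor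
  · cases ys with
    | nil => simp at hlast
    | cons a l => simpa using hh
  · change List.IsChain Move (ys ++ [Y])
    rw [List.isChain_append]
    refine ⟨hch, List.isChain_singleton Y, ?_⟩
    intro x hx y' hy'
    simp only [List.head?_cons, Option.mem_def, Option.some.injEq] at hy'
    rw [hlast] at hx
    simp only [Option.mem_def, Option.some.injEq] at hx
    subst hx; subst hy'
    exact hmove

lemma consistent_snoc {σ : ℕ → Multiset ℕ → Multiset ℕ} {p m : ℕ} {y Y : Multiset ℕ}
    {ys : List (Multiset ℕ)} (h : Consistent σ p m ys) (hlast : ys.getLast? = some y)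
    (hY : (ys.length - 1) % p + 1 = m → Y = σ (ys.length - 1) y) :
    Consistent σ p m (ys ++ [Y]) := by
  have hne : ys ≠ [] := by rintro rfl; simp at hlast
  have hpos : 1 ≤ ys.length := List.length_pos_iff.mpr hne
  intro t ht hm
  rw [List.length_append, List.length_singleton] at ht
  rcases Nat.lt_or_ge (t + 1) ys.length with hlt | hge
  · rw [getD_append_lt hlt, getD_append_lt (by omega)]
    exact h t hlt hm
  · have ht' : t = ys.length - 1 := by omega
    subst ht'
    rw [show ys.length - 1 + 1 = ys.length by omega, getD_append_len,
      getD_append_lt (by omega), getD_of_getLast? hlast]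
    exact hY hm

lemma paired_ext {c k p m n : ℕ} (hc : 1 ≤ c) (hk : 1 ≤ k) (hp : 2 ≤ p)
    (σ : ℕ → Multiset ℕ → Multiset ℕ)
    (hσ : IsWinningStrategy (CkMove c k) p m (Multiset.replicate n 1) σ) :
    ∀ N R ys zs, mu R ≤ N →
      IsPlay (CkMove c k) (Multiset.replicate n 1) ys → Consistent σ p m ys →
      ys.getLast? = some R →
      IsPlay (CkMove c k) (Multiset.replicate n 1) zs → Consistent σ p m zs →
      zs.getLast? = some R → zs.length = ys.length + 1 →
      ∃ L : List (Multiset ℕ),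
        IsCompletePlay (CkMove c k) (Multiset.replicate n 1) (ys ++ L) ∧
        Consistent σ p m (ys ++ L) ∧
        IsCompletePlay (CkMove c k) (Multiset.replicate n 1) (zs ++ L) ∧
        Consistent σ p m (zs ++ L) := by
  intro N
  induction N using Nat.strong_induction_on with
  | _ N ih =>
    intro R ys zs hmu hy1 hy2 hy3 hz1 hz2 hz3 hlen
    by_cases hterm : ∃ B, CkMove c k R B
    · -- a move exists: extend by one and recurse
      have hne : ys ≠ [] := by rintro rfl; simp at hy3
      have hpos : 1 ≤ ys.length := List.length_pos_iff.mpr hne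
      set u := ys.length - 1 with hu
      have hzlen : zs.length - 1 = u + 1 := by omega
      obtain ⟨Y, hmove, hYA, hYB⟩ :
          ∃ Y, CkMove c k R Y ∧ (u % p + 1 = m → Y = σ u R) ∧
            ((u + 1) % p + 1 = m → Y = σ (u + 1) R) := by
        by_cases hA : u % p + 1 = m
        · refine ⟨σ u R, hσ.1 ys hy1 hy2 R hy3 hA hterm, fun _ => rfl, fun hB => ?_⟩
          exact absurd (show (u + 1) % p = u % p by omega) (mod_succ_ne (u := u) hp)
        · by_cases hB : (u + 1) % p + 1 = m
          · refine ⟨σ (u + 1) R, ?_, fun hA' => absurd hA' hA, fun _ => rfl⟩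
            have h := hσ.1 zs hz1 hz2 R hz3 (by rw [hzlen]; exact hB) hterm
            rwa [hzlen] at h
          · exact ⟨hterm.choose, hterm.choose_spec, fun h => absurd h hA,
              fun h => absurd h hB⟩
      have hmuY : mu Y < mu R := ckmove_mu_lt hc hk hmove
      obtain ⟨L, c1, c2, c3, c4⟩ :=
        ih (mu Y) (by omega) Y (ys ++ [Y]) (zs ++ [Y]) le_rfl
          (isPlay_snoc hy1 hy3 hmove)
          (consistent_snoc hy2 hy3 (fun h => hYA h))
          (by simp)
          (isPlay_snoc hz1 hz3 hmove)
          (consistent_snoc hz2 hz3 (fun h => by rw [hzlen] at h; rw [hzlen]; exact hYB h))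
          (by simp)
          (by simp [hlen])
      refine ⟨Y :: L, ?_, ?_, ?_, ?_⟩
      · rwa [show ys ++ Y :: L = (ys ++ [Y]) ++ L by simp]
      · rwa [show ys ++ Y :: L = (ys ++ [Y]) ++ L by simp]
      · rwa [show zs ++ Y :: L = (zs ++ [Y]) ++ L by simp]
      · rwa [show zs ++ Y :: L = (zs ++ [Y]) ++ L by simp]
    · -- terminal: stop here
      refine ⟨[], ⟨by simpa using hy1, R, by simpa using hy3, ?_⟩, by simpa using hy2,
        ⟨by simpa using hz1, R, by simpa using hz3, ?_⟩, by simpa using hz2⟩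
      · intro B hB; exact hterm ⟨B, hB⟩
      · intro B hB; exact hterm ⟨B, hB⟩

lemma le_aux1 {c : ℕ} (hc : 1 ≤ c) (P : Multiset ℕ)
    (n1 : c + 1 ≤ P.count 1) (n2 : c ≤ P.count (c + 1)) :
    Multiset.replicate c 1 + Multiset.replicate c (c + 1) ≤ P := by
  rw [Multiset.le_iff_count]
  intro a
  rw [Multiset.count_add, Multiset.count_replicate, Multiset.count_replicate]
  by_cases h1 : a = 1
  · subst h1; split_ifs <;> omega
  · by_cases h2 : a = c + 1
    · subst h2; split_ifs <;> omega
    · split_ifs <;> omega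

lemma le_aux2 {c : ℕ} (hc : 1 ≤ c) (P : Multiset ℕ)
    (n1 : c + 1 ≤ P.count 1) (n2 : c ≤ P.count (c + 1)) :
    Multiset.replicate (c + 1) 1 + Multiset.replicate c (c + 1) ≤ P := by
  rw [Multiset.le_iff_count]
  intro a
  rw [Multiset.count_add, Multiset.count_replicate, Multiset.count_replicate]
  by_cases h1 : a = 1
  · subst h1; split_ifs <;> omega
  · by_cases h2 : a = c + 1
    · subst h2; split_ifs <;> omega
    · split_ifs <;> omega

lemma eq_aux1 {c : ℕ} (hc : 1 ≤ c) (P : Multiset ℕ) (v3 : ℕ)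
    (n1 : c + 1 ≤ P.count 1) (n2 : c ≤ P.count (c + 1)) :
    P - Multiset.replicate (c + 1) 1 + {c + 1} - Multiset.replicate (c + 1) (c + 1) +
      ({v3, 1} : Multiset ℕ)
    = P - (Multiset.replicate c 1 + Multiset.replicate c (c + 1)) + {v3} := by
  rw [Multiset.ext]
  intro a
  simp only [Multiset.insert_eq_cons, Multiset.count_add, Multiset.count_sub,
    Multiset.count_replicate, Multiset.count_singleton, Multiset.count_cons]
  by_cases h1 : a = 1
  · subst h1; split_ifs <;> omega
  · by_cases h2 : a = c + 1
    · subst h2; split_ifs <;> omega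
    · split_ifs <;> omega

lemma eq_aux2 {c : ℕ} (hc : 1 ≤ c) (P : Multiset ℕ) (v3 : ℕ)
    (n1 : c + 1 ≤ P.count 1) (n2 : c ≤ P.count (c + 1)) :
    P - Multiset.replicate (c + 1) 1 + {c + 1} - Multiset.replicate (c + 1) (c + 1) +
      ({v3} : Multiset ℕ)
    = P - (Multiset.replicate (c + 1) 1 + Multiset.replicate c (c + 1)) + {v3} := by
  rw [Multiset.ext]
  intro a
  simp only [Multiset.count_add, Multiset.count_sub, Multiset.count_replicate,
    Multiset.count_singleton]
  by_cases h1 : a = 1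
  · subst h1; split_ifs <;> omega
  · by_cases h2 : a = c + 1
    · subst h2; split_ifs <;> omega
    · split_ifs <;> omega

lemma deviation_move {c k : ℕ} (hc : 1 ≤ c) (hk : 1 ≤ k) {P Q R : Multiset ℕ}
    (hP : Multiset.replicate (c + 1) (nacci c k 1) ≤ P)
    (hQ : Q = P - Multiset.replicate (c + 1) (nacci c k 1) + {nacci c k 2})
    (hR2 : Multiset.replicate (c + 1) (nacci c k 2) ≤ Q)
    (hR : R = Q - Multiset.replicate (c + 1) (nacci c k 2) +
      (if k = 1 then ({nacci c k 3, nacci c k 1} : Multiset ℕ) else {nacci c k 3})) :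
    CkMove c k P R := by
  have hv1 : nacci c k 1 = 1 := nacci_one
  have hv2 : nacci c k 2 = c + 1 := nacci_two hk
  rw [hv1] at hP hQ
  rw [hv2] at hQ hR2 hR
  rw [hv1] at hR
  set v3 := nacci c k 3 with hv3
  have n1 : c + 1 ≤ Multiset.count 1 P := by
    have := Multiset.le_iff_count.mp hP 1
    simpa using this
  have n2 : c ≤ Multiset.count (c + 1) P := by
    have h := Multiset.le_iff_count.mp hR2 (c + 1)
    rw [hQ] at h
    simp only [Multiset.count_add, Multiset.count_sub, Multiset.count_replicate,
      Multiset.count_singleton] at h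
    split_ifs at h <;> omega
  by_cases hk1 : k = 1
  · subst hk1
    rw [if_pos rfl] at hR
    have hblock : nacciBlock c 1 (Finset.Icc (2 - 1) 2)
        = Multiset.replicate c 1 + Multiset.replicate c (c + 1) := by
      rw [show Finset.Icc (2 - 1) 2 = Finset.Icc 1 2 from rfl, nacciBlock]
      rw [show (Finset.Icc 1 2).val = ({1, 2} : Multiset ℕ) by rfl]
      rw [show ({1, 2} : Multiset ℕ) = 1 ::ₘ {2} from rfl, Multiset.cons_bind,
        Multiset.singleton_bind, hv1, hv2]
    refine Or.inl ⟨2, le_rfl, ?_, ?_⟩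
    · rw [hblock]
      exact le_aux1 hc P n1 n2
    · rw [hblock, hR, hQ, show nacci c 1 (2 + 1) = v3 by norm_num [hv3]]
      exact eq_aux1 hc P v3 n1 n2
  · have hk2 : 2 ≤ k := by omega
    rw [if_neg hk1] at hR
    have hblock : nacciBlock c k (Finset.Icc 2 2) = Multiset.replicate c (c + 1) := by
      rw [Finset.Icc_self, nacciBlock]
      rw [show ({2} : Finset ℕ).val = ({2} : Multiset ℕ) from rfl,
        Multiset.singleton_bind, hv2]
    refine Or.inr (Or.inl ⟨2, le_rfl, hk2, ?_, ?_⟩)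
    · rw [hv1, hblock]
      exact le_aux2 hc P n1 n2
    · rw [hv1, hblock, hR, hQ, show nacci c k (2 + 1) = v3 by norm_num [hv3]]
      exact eq_aux2 hc P v3 n1 n2

/-- Let `p ≥ 3` and suppose player `m` (`1 ≤ m ≤ p`) has a winning strategy `σ` in the
`p`-player `(c,k)`-nacci Zeckendorf game on `n`.  Then no complete play consistent with
`σ` contains the following `c+2` consecutive moves — `c+1` moves each replacing `c+1`
copies of `S₁` by `S₂`, followed by the move replacing `c+1` copies of `S₂` by `S₃` and
`S₁` (if `k = 1`) or by `S₃` (if `k > 1`) — unless player `m` is the one who makes the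
`(c+1)`-st of these moves (move number `t + c`). -/
theorem winning_path_avoids_steal_pattern_ck_nacci (c k p m n : ℕ)
    (hc : 1 ≤ c) (hk : 1 ≤ k) (hp : 3 ≤ p) (hm1 : 1 ≤ m) (hmp : m ≤ p)
    (σ : ℕ → Multiset ℕ → Multiset ℕ)
    (hσ : IsWinningStrategy (CkMove c k) p m (Multiset.replicate n 1) σ)
    (xs : List (Multiset ℕ))
    (hplay : IsCompletePlay (CkMove c k) (Multiset.replicate n 1) xs)
    (hcons : Consistent σ p m xs)
    (t : ℕ) (ht : t + c + 2 < xs.length)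
    (h1 : ∀ j, j ≤ c →
      Multiset.replicate (c + 1) (nacci c k 1) ≤ xs.getD (t + j) 0 ∧
      xs.getD (t + j + 1) 0 =
        xs.getD (t + j) 0 - Multiset.replicate (c + 1) (nacci c k 1) + {nacci c k 2})
    (h2 : Multiset.replicate (c + 1) (nacci c k 2) ≤ xs.getD (t + c + 1) 0 ∧
      xs.getD (t + c + 2) 0 =
        xs.getD (t + c + 1) 0 - Multiset.replicate (c + 1) (nacci c k 2) +
          (if k = 1 then ({nacci c k 3, nacci c k 1} : Multiset ℕ) else {nacci c k 3})) :
    (t + c) % p + 1 = m := by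
  by_contra hnm
  obtain ⟨hP, hQ⟩ := h1 c le_rfl
  obtain ⟨hR2, hR⟩ := h2
  set R := xs.getD (t + c + 2) 0 with hRdef
  have hMove : CkMove c k (xs.getD (t + c) 0) R := deviation_move hc hk hP hQ hR2 hR
  set ys : List (Multiset ℕ) := xs.take (t + c + 1) ++ [R] with hys
  set zs : List (Multiset ℕ) := xs.take (t + c + 3) with hzs
  have hlt : (xs.take (t + c + 1)).length = t + c + 1 := by
    rw [List.length_take]; omega
  have lys : ys.length = t + c + 2 := by
    rw [hys, List.length_append, hlt, List.length_singleton]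
  have lzs : zs.length = t + c + 3 := by
    rw [hzs, List.length_take]; omega
  have hlast_take : (xs.take (t + c + 1)).getLast? = some (xs.getD (t + c) 0) :=
    getLast?_take (by omega)
  have hy3 : ys.getLast? = some R := by
    rw [hys, List.getLast?_concat]
  have hz3 : zs.getLast? = some R := by
    rw [hzs, show t + c + 3 = (t + c + 2) + 1 from rfl]
    exact getLast?_take (by omega)
  have hy1 : IsPlay (CkMove c k) (Multiset.replicate n 1) ys :=
    isPlay_snoc (isPlay_take hplay.1 (t + c)) hlast_take hMove
  have hz1 : IsPlay (CkMove c k) (Multiset.replicate n 1) zs := by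
    rw [hzs, show t + c + 3 = (t + c + 2) + 1 from rfl]
    exact isPlay_take hplay.1 (t + c + 2)
  have hy2 : Consistent σ p m ys := by
    apply consistent_snoc (consistent_take hcons (t + c + 1)) hlast_take
    intro h
    rw [hlt, Nat.add_sub_cancel] at h
    exact absurd h hnm
  have hz2 : Consistent σ p m zs := consistent_take hcons (t + c + 3)
  obtain ⟨L, cA, cA', cB, cB'⟩ :=
    paired_ext hc hk (by omega) σ hσ (mu R) R ys zs le_rfl hy1 hy2 hy3 hz1 hz2 hz3
      (by rw [lys, lzs])
  have e1 := hσ.2 (ys ++ L) cA cA'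
  have e2 := hσ.2 (zs ++ L) cB cB'
  rw [List.length_append, lys, show t + c + 2 + L.length - 2 = t + c + L.length by omega]
    at e1
  rw [List.length_append, lzs,
    show t + c + 3 + L.length - 2 = t + c + L.length + 1 by omega] at e2
  exact mod_succ_ne (p := p) (u := t + c + L.length) (by omega) (by omega)
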